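/- Let R be a commutative ring, A a t-pgg graded R-algebra (t ≥ 1), and R → R' a homomorphism of commutative rings. Then the graded R'-algebra A ⊗_R R', with grading whose degree-n component is the image of 𝒜 n ⊗_R R' in A ⊗_R R', is a t-pgg R'-algebra. -/
import Mathlib


/-!
Partially generated graded algebras (pgg).

A graded `R`-algebra `A` (grading `𝒜 : ℕ → Submodule R A`) is `t`-pgg if the evaluation
map from the (weighted) polynomial ring on variables `X_(i,a)` (`1 ≤ i ≤ t`, `a ∈ 𝒜 i`,
`X_(i,a)` of weight `i`) sending `X_(i,a) ↦ a` is surjective and its kernel is generated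
by weighted-homogeneous polynomials of weighted degree at most `t`.
-/

open MvPolynomial

/-- The variables `X_(i,a)` for `1 ≤ i ≤ t` and `a ∈ 𝒜 i`. -/
abbrev PggVars {R A : Type*} [CommRing R] [CommRing A] [Algebra R A]
    (𝒜 : ℕ → Submodule R A) (t : ℕ) : Type _ :=
  Σ i : Set.Icc 1 t, 𝒜 (i : ℕ)

/-- The weight of the variable `X_(i,a)` is `i`. -/
def pggWeight {R A : Type*} [CommRing R] [CommRing A] [Algebra R A]
    (𝒜 : ℕ → Submodule R A) (t : ℕ) : PggVars 𝒜 t → ℕ :=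
  fun v => (v.1 : ℕ)

/-- The evaluation homomorphism `ev_t`, sending `X_(i,a)` to `a`. -/
noncomputable def pggEval {R A : Type*} [CommRing R] [CommRing A] [Algebra R A]
    (𝒜 : ℕ → Submodule R A) (t : ℕ) :
    MvPolynomial (PggVars 𝒜 t) R →ₐ[R] A :=
  aeval fun v => (v.2 : A)

/-- `A` is a `t`-partially generated graded (`t`-pgg) `R`-algebra: `ev_t` is surjective and
its kernel is generated by weighted-homogeneous polynomials of weighted degree at most `t`. -/
def IsPgg {R A : Type*} [CommRing R] [CommRing A] [Algebra R A]
    (𝒜 : ℕ → Submodule R A) (t : ℕ) : Prop :=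
  Function.Surjective (pggEval 𝒜 t) ∧
  ∃ S : Set (MvPolynomial (PggVars 𝒜 t) R),
    (∀ p ∈ S, ∃ n ≤ t, p.IsWeightedHomogeneous (pggWeight 𝒜 t) n) ∧
    RingHom.ker (pggEval 𝒜 t) = Ideal.span S


private lemma IsWeightedHomogeneous.mapCoeff {R R' σ : Type*} [CommRing R] [CommRing R']
    (f : R →+* R') {w : σ → ℕ} {p : MvPolynomial σ R} {n : ℕ}
    (h : p.IsWeightedHomogeneous w n) :
    (MvPolynomial.map f p).IsWeightedHomogeneous w n := by
  intro d hd
  rw [MvPolynomial.coeff_map] at hd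
  exact h fun h0 => hd (by rw [h0, map_zero])

private lemma IsWeightedHomogeneous.renameVars {R σ τ : Type*} [CommRing R]
    {j : σ → τ} {w : σ → ℕ} {w' : τ → ℕ} (hw : ∀ s, w' (j s) = w s)
    {p : MvPolynomial σ R} {n : ℕ} (h : p.IsWeightedHomogeneous w n) :
    (rename j p).IsWeightedHomogeneous w' n := by
  intro d hd
  obtain ⟨u, hu, hne⟩ := coeff_rename_ne_zero j p d hd
  rw [← hu, ← h hne]
  rw [Finsupp.weight_apply, Finsupp.weight_apply]
  refine (Finsupp.sum_mapDomain_index (fun a => zero_smul ℕ (w' a))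
    (fun a b c => add_smul b c (w' a))).trans ?_
  simp only [hw]

private lemma pggEval_X {R A : Type*} [CommRing R] [CommRing A] [Algebra R A]
    (𝒜 : ℕ → Submodule R A) (t : ℕ) (v : PggVars 𝒜 t) :
    pggEval 𝒜 t (X v) = (v.2 : A) :=
  aeval_X _ v




open TensorProduct in
/-- **Proposition 5.16** (base change): if `A` is a `t`-pgg graded `R`-algebra and `R → R'`
is a ring homomorphism, then `A ⊗_R R'` (with degree-`n` component the `R'`-span of the image
of `𝒜 n`) is a `t`-pgg `R'`-algebra. -/
theorem stmt11 {R A : Type*} [CommRing R] [CommRing A] [Algebra R A]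
    (𝒜 : ℕ → Submodule R A) [GradedAlgebra 𝒜]
    (h0 : 𝒜 0 = LinearMap.range (Algebra.linearMap R A))
    (t : ℕ) (ht : 1 ≤ t) (hpgg : IsPgg 𝒜 t)
    (R' : Type*) [CommRing R'] [Algebra R R'] :
    IsPgg (fun n => Submodule.span R'
      ((fun a => (1 : R') ⊗ₜ[R] a) '' (𝒜 n : Set A))) t := by
  classical
  obtain ⟨hsurj, S, hShom, hSker⟩ := hpgg
  set 𝒜' : ℕ → Submodule R' (R' ⊗[R] A) :=
    fun n => Submodule.span R' ((fun a => (1 : R') ⊗ₜ[R] a) '' (𝒜 n : Set A)) with h𝒜'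
  set j : PggVars 𝒜 t → PggVars 𝒜' t :=
    fun v => ⟨v.1, ⟨(1 : R') ⊗ₜ[R] (v.2 : A),
      Submodule.subset_span ⟨(v.2 : A), v.2.2, rfl⟩⟩⟩ with hj
  set ψ : MvPolynomial (PggVars 𝒜 t) R' →ₐ[R'] R' ⊗[R] A :=
    aeval (fun v => (1 : R') ⊗ₜ[R] (v.2 : A)) with hψdef
  -- pggEval 𝒜' t composed with rename j is ψ
  have hψrename : ∀ p : MvPolynomial (PggVars 𝒜 t) R',
      pggEval 𝒜' t (rename j p) = ψ p := by
    intro p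
    unfold pggEval
    rw [aeval_rename]
    rfl
  -- ψ of a base-changed polynomial
  have hψmap : ∀ p : MvPolynomial (PggVars 𝒜 t) R,
      ψ (MvPolynomial.map (algebraMap R R') p) = (1 : R') ⊗ₜ[R] (pggEval 𝒜 t p) := by
    intro p
    rw [hψdef, aeval_map_algebraMap, aeval_one_tmul]
    rfl
  -- ψ is the base change of pggEval 𝒜 t
  have hFψ : ∀ x : R' ⊗[R] MvPolynomial (PggVars 𝒜 t) R,
      ψ (MvPolynomial.algebraTensorAlgEquiv R R' x) =
        Algebra.TensorProduct.map (AlgHom.id R R') (pggEval 𝒜 t) x := by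
    intro x
    induction x using TensorProduct.induction_on with
    | zero => simp
    | tmul r p =>
        rw [algebraTensorAlgEquiv_tmul, map_smul, hψmap, Algebra.TensorProduct.map_tmul,
          AlgHom.coe_id, id_eq, TensorProduct.smul_tmul', smul_eq_mul, mul_one]
    | add x y hx hy => rw [map_add, map_add, map_add, hx, hy]
  -- the kernel of ψ
  have hkerψ : ∀ q : MvPolynomial (PggVars 𝒜 t) R', ψ q = 0 →
      q ∈ Ideal.span ((fun s => MvPolynomial.map (algebraMap R R') s) '' S) := by
    intro q hq
    set e := MvPolynomial.algebraTensorAlgEquiv R R' (σ := PggVars 𝒜 t) with he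
    have hx : e.symm q ∈
        RingHom.ker (Algebra.TensorProduct.map (AlgHom.id R R') (pggEval 𝒜 t)) := by
      rw [RingHom.mem_ker, ← hFψ, AlgEquiv.apply_symm_apply, hq]
    rw [Algebra.TensorProduct.lTensor_ker (pggEval 𝒜 t) hsurj, hSker, Ideal.map_span] at hx
    have h2 := Ideal.mem_map_of_mem e.toAlgHom hx
    rw [Ideal.map_span, ← Set.image_comp] at h2
    have hq2 : e.toAlgHom (e.symm q) = q := e.apply_symm_apply q
    rw [hq2] at h2
    have himg : ((⇑e.toAlgHom ∘ ⇑(Algebra.TensorProduct.includeRight :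
        MvPolynomial (PggVars 𝒜 t) R →ₐ[R] R' ⊗[R] MvPolynomial (PggVars 𝒜 t) R)) '' S)
        = (fun s => MvPolynomial.map (algebraMap R R') s) '' S := by
      apply Set.image_congr
      intro s _
      show e ((1 : R') ⊗ₜ[R] s) = _
      rw [algebraTensorAlgEquiv_tmul, one_smul]
    rwa [himg] at h2
  -- surjectivity
  have hsurj' : Function.Surjective (pggEval 𝒜' t) := by
    intro x
    induction x using TensorProduct.induction_on with
    | zero => exact ⟨0, map_zero _⟩
    | tmul r a =>
        obtain ⟨p, hp⟩ := hsurj a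
        refine ⟨r • rename j (MvPolynomial.map (algebraMap R R') p), ?_⟩
        rw [map_smul, hψrename, hψmap, hp, TensorProduct.smul_tmul', smul_eq_mul, mul_one]
    | add x y hx hy =>
        obtain ⟨p, hp⟩ := hx
        obtain ⟨q, hq⟩ := hy
        exact ⟨p + q, by rw [map_add, hp, hq]⟩
  -- for each new variable, a weighted-homogeneous lift of its value
  have hL : ∀ v : PggVars 𝒜' t, ∃ q : MvPolynomial (PggVars 𝒜 t) R',
      ψ q = (v.2 : R' ⊗[R] A) ∧ q.IsWeightedHomogeneous (pggWeight 𝒜 t) (v.1 : ℕ) := by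
    intro v
    obtain ⟨n, c, g, hg⟩ := Submodule.mem_span_set'.mp v.2.2
    choose a ha hae using fun i => (g i).2
    refine ⟨∑ i, c i • X ⟨v.1, ⟨a i, ha i⟩⟩, ?_, ?_⟩
    · rw [map_sum]
      simp only [map_smul, hψdef, aeval_X]
      simp only [hae]
      exact hg
    · have : (∑ i, c i • X ⟨v.1, ⟨a i, ha i⟩⟩ : MvPolynomial (PggVars 𝒜 t) R') ∈
          weightedHomogeneousSubmodule R' (pggWeight 𝒜 t) (v.1 : ℕ) := by
        apply Submodule.sum_mem
        intro i _
        exact Submodule.smul_mem _ _ (isWeightedHomogeneous_X R' _ _)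
      exact this
  choose L hLψ hLhom using hL
  -- every polynomial reduces, modulo the variable relations, to a renamed one
  have hred : ∀ p : MvPolynomial (PggVars 𝒜' t) R', ∃ q,
      p - rename j q ∈ Ideal.span (Set.range fun v =>
        (X v : MvPolynomial (PggVars 𝒜' t) R') - rename j (L v)) := by
    intro p
    induction p using MvPolynomial.induction_on with
    | C r => exact ⟨C r, by rw [rename_C, sub_self]; exact Ideal.zero_mem _⟩
    | add p₁ p₂ h1 h2 =>
        obtain ⟨q₁, hq₁⟩ := h1
        obtain ⟨q₂, hq₂⟩ := h2
        refine ⟨q₁ + q₂, ?_⟩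
        rw [map_add]
        have heq : p₁ + p₂ - (rename j q₁ + rename j q₂)
            = (p₁ - rename j q₁) + (p₂ - rename j q₂) := by ring
        rw [heq]
        exact Ideal.add_mem _ hq₁ hq₂
    | mul_X p v hp =>
        obtain ⟨q, hq⟩ := hp
        refine ⟨q * L v, ?_⟩
        have heq : p * X v - rename j (q * L v)
            = (p - rename j q) * X v + rename j q * (X v - rename j (L v)) := by
          rw [map_mul]; ring
        rw [heq]
        exact Ideal.add_mem _ (Ideal.mul_mem_right _ _ hq)
          (Ideal.mul_mem_left _ _ (Ideal.subset_span ⟨v, rfl⟩))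
  refine ⟨hsurj', (fun s => rename j (MvPolynomial.map (algebraMap R R') s)) '' S ∪
      Set.range (fun v => (X v : MvPolynomial (PggVars 𝒜' t) R') - rename j (L v)), ?_, ?_⟩
  · rintro p (⟨s, hs, rfl⟩ | ⟨v, rfl⟩)
    · obtain ⟨m, hm, hhom⟩ := hShom s hs
      exact ⟨m, hm, IsWeightedHomogeneous.renameVars (fun u => rfl)
        (IsWeightedHomogeneous.mapCoeff _ hhom)⟩
    · refine ⟨(v.1 : ℕ), v.1.2.2, ?_⟩
      have h1 : (X v : MvPolynomial (PggVars 𝒜' t) R') ∈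
          weightedHomogeneousSubmodule R' (pggWeight 𝒜' t) (v.1 : ℕ) :=
        isWeightedHomogeneous_X R' _ v
      have h2 : rename j (L v) ∈
          weightedHomogeneousSubmodule R' (pggWeight 𝒜' t) (v.1 : ℕ) :=
        IsWeightedHomogeneous.renameVars (fun u => rfl) (hLhom v)
      exact Submodule.sub_mem _ h1 h2
  · apply le_antisymm
    · intro p hp
      obtain ⟨q, hq⟩ := hred p
      have hJ0 : Ideal.span (Set.range fun v =>
          (X v : MvPolynomial (PggVars 𝒜' t) R') - rename j (L v))
          ≤ RingHom.ker (pggEval 𝒜' t) := by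
        rw [Ideal.span_le]
        rintro _ ⟨v, rfl⟩
        simp only [SetLike.mem_coe, RingHom.mem_ker]
        rw [map_sub, hψrename, hLψ, pggEval_X, sub_self]
      have hψq : ψ q = 0 := by
        have h1 : pggEval 𝒜' t (p - rename j q) = 0 := hJ0 hq
        rw [map_sub, RingHom.mem_ker.mp hp, hψrename, zero_sub, neg_eq_zero] at h1
        exact h1
      have hq' := hkerψ q hψq
      have h3 := Ideal.mem_map_of_mem (rename j) hq'
      rw [Ideal.map_span, ← Set.image_comp] at h3
      have h4 : p = (p - rename j q) + rename j q := by ring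
      rw [h4]
      refine Ideal.add_mem _ (Ideal.span_mono Set.subset_union_right hq)
        (Ideal.span_mono ?_ h3)
      rintro _ ⟨s, hs, rfl⟩
      exact Set.mem_union_left _ ⟨s, hs, rfl⟩
    · rw [Ideal.span_le]
      rintro p (⟨s, hs, rfl⟩ | ⟨v, rfl⟩)
      · simp only [SetLike.mem_coe, RingHom.mem_ker]
        rw [hψrename, hψmap,
          RingHom.mem_ker.mp (hSker ▸ Ideal.subset_span hs : s ∈ RingHom.ker (pggEval 𝒜 t)),
          TensorProduct.tmul_zero]
      · simp only [SetLike.mem_coe, RingHom.mem_ker]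
        rw [map_sub, hψrename, hLψ, pggEval_X, sub_self]
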